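/- For any coloring of an AGW graph, every state belongs to some F-clique. -/
import Mathlib


/-- A directed cycle in the multigraph `E`: a nonempty list of distinct vertices,
consecutive vertices joined by edges, and an edge from the last back to the first. -/
def IsCycle {V : Type} (E : V → Multiset V) (l : List V) : Prop :=
  ∃ h : l ≠ [], l.Nodup ∧ l.Chain' (fun a b => b ∈ E a) ∧ l.head h ∈ E (l.getLast h)

/-- An AGW graph: constant outdegree `k`, strongly connected, and the gcd of the
lengths of all directed cycles is 1 (every common divisor of cycle lengths is 1). -/
def IsAGW {V : Type} (E : V → Multiset V) (k : ℕ) : Prop :=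
  (∀ v, Multiset.card (E v) = k) ∧
  (∀ u v : V, Relation.ReflTransGen (fun a b => b ∈ E a) u v) ∧
  (∀ d : ℕ, (∀ l : List V, IsCycle E l → d ∣ l.length) → d = 1)

/-- A coloring of the multigraph: for every vertex `v` the multiset of images
`{δ a v : a ∈ Fin k}` (with multiplicity) equals `E v`. -/
def IsColoring {V : Type} [Fintype V] {k : ℕ} (E : V → Multiset V)
    (δ : Fin k → V → V) : Prop :=
  ∀ v, Multiset.map (fun a => δ a v) (Finset.univ : Finset (Fin k)).val = E v

/-- The map `δ_s` of a word `s`: apply the letters of `s` from left to right. -/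
def wordMap {V : Type} {k : ℕ} (δ : Fin k → V → V) (s : List (Fin k)) (v : V) : V :=
  s.foldl (fun x a => δ a x) v

/-- A pair of states is synchronizing if some word maps them to the same state. -/
def SyncPair {V : Type} {k : ℕ} (δ : Fin k → V → V) (p q : V) : Prop :=
  ∃ s : List (Fin k), wordMap δ s p = wordMap δ s q

/-- A pair is stable if all of its images under words are equal or synchronizing. -/
def Stable {V : Type} {k : ℕ} (δ : Fin k → V → V) (p q : V) : Prop :=
  ∀ u : List (Fin k), SyncPair δ (wordMap δ u p) (wordMap δ u q)

/-- A word is synchronizing if it maps the whole state set to a single state. -/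
def IsSynchronizingWord {V : Type} {k : ℕ} (δ : Fin k → V → V) (s : List (Fin k)) : Prop :=
  ∃ q : V, ∀ v : V, wordMap δ s v = q

/-- An F-clique: an image `V·s` of the whole state set in which every pair of
distinct states is a deadlock (not synchronizing). -/
def IsFClique {V : Type} [Fintype V] [DecidableEq V] {k : ℕ}
    (δ : Fin k → V → V) (F : Finset V) : Prop :=
  (∃ s : List (Fin k), F = Finset.image (wordMap δ s) Finset.univ) ∧
  ∀ p ∈ F, ∀ q ∈ F, p ≠ q → ¬ SyncPair δ p q

/-- A weight function: positive and a left eigenvector of the adjacency matrix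
(multiplicities of edges) with eigenvalue `k`. -/
def IsWeight {V : Type} [Fintype V] [DecidableEq V] (E : V → Multiset V) (k : ℕ)
    (w : V → ℕ) : Prop :=
  (∀ v, 1 ≤ w v) ∧ ∀ q, (∑ p, w p * (E p).count q) = k * w q

/-- The weight of a set of vertices. -/
def weight {V : Type} (w : V → ℕ) (D : Finset V) : ℕ := ∑ p ∈ D, w p

/-- `D` is mapped to a single state by some word. -/
def IsSyncSet {V : Type} [Fintype V] [DecidableEq V] {k : ℕ} (δ : Fin k → V → V)
    (D : Finset V) : Prop :=
  ∃ s : List (Fin k), (D.image (wordMap δ s)).card = 1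

/-- An F-maximal set: a set mapped to a single state by some word, of maximal weight. -/
def IsFMaximal {V : Type} [Fintype V] [DecidableEq V] {k : ℕ} (δ : Fin k → V → V)
    (w : V → ℕ) (D : Finset V) : Prop :=
  IsSyncSet δ D ∧ ∀ D' : Finset V, IsSyncSet δ D' → weight w D' ≤ weight w D

/-- `w*`: the maximal weight of a set mapped to a single state by some word. -/
noncomputable def wstar {V : Type} [Fintype V] [DecidableEq V] {k : ℕ}
    (δ : Fin k → V → V) (w : V → ℕ) : ℕ :=
  sSup {m | ∃ D : Finset V, IsSyncSet δ D ∧ weight w D = m}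

/-- A spanning subgraph: a choice of one outgoing edge of every vertex. -/
def IsSpanning {V : Type} (E : V → Multiset V) (f : V → V) : Prop :=
  ∀ v, f v ∈ E v

/-- The level of a vertex: the least `m` such that `f^[m] v` is `f`-periodic. -/
noncomputable def level {V : Type} (f : V → V) (v : V) : ℕ :=
  sInf {m | ∃ n > 0, f^[n] (f^[m] v) = f^[m] v}

/-- The root of a vertex: its image on the cycle reached along its tree. -/
noncomputable def root {V : Type} (f : V → V) (v : V) : V :=
  f^[level f v] v

lemma wordMap_append {V : Type} {k : ℕ} (δ : Fin k → V → V) (s t : List (Fin k)) (v : V) :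
    wordMap δ (s ++ t) v = wordMap δ t (wordMap δ s v) := by
  simp [wordMap, List.foldl_append]

lemma exists_word_of_reach {V : Type} [Fintype V] {k : ℕ} {E : V → Multiset V}
    {δ : Fin k → V → V} (hδ : IsColoring E δ) {q p : V}
    (h : Relation.ReflTransGen (fun a b => b ∈ E a) q p) :
    ∃ u : List (Fin k), wordMap δ u q = p := by
  induction h with
  | refl => exact ⟨[], rfl⟩
  | tail _ hedge ih =>
    obtain ⟨u, hu⟩ := ih
    rename_i b c _
    have : c ∈ Multiset.map (fun a => δ a b) (Finset.univ : Finset (Fin k)).val := by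
      rw [hδ b]; exact hedge
    obtain ⟨a, _, ha⟩ := Multiset.mem_map.mp this
    exact ⟨u ++ [a], by rw [wordMap_append, hu]; simpa [wordMap] using ha⟩

/-- For any coloring of an AGW graph, every state belongs to some F-clique. -/
theorem mem_FClique {V : Type} [Fintype V] [DecidableEq V] [Nonempty V]
    (E : V → Multiset V) (k : ℕ) (hAGW : IsAGW E k)
    (δ : Fin k → V → V) (hδ : IsColoring E δ) (p : V) :
    ∃ F : Finset V, IsFClique δ F ∧ p ∈ F := by
  classical
  set S : Set ℕ := {n | ∃ s : List (Fin k),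
    (Finset.image (wordMap δ s) Finset.univ).card = n} with hS
  have hSne : S.Nonempty := ⟨_, [], rfl⟩
  obtain ⟨s, hs⟩ := Nat.sInf_mem hSne
  set F₀ : Finset V := Finset.image (wordMap δ s) Finset.univ with hF₀
  -- every distinct pair in F₀ is a deadlock
  have hdead : ∀ x ∈ F₀, ∀ y ∈ F₀, x ≠ y → ¬ SyncPair δ x y := by
    intro x hx y hy hxy ⟨t, ht⟩
    have hsub : Finset.image (wordMap δ (s ++ t)) Finset.univ
        = F₀.image (wordMap δ t) := by
      rw [hF₀, Finset.image_image]
      exact Finset.image_congr (fun v _ => wordMap_append δ s t v)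
    have hle : (F₀.image (wordMap δ t)).card ≤ F₀.card := Finset.card_image_le
    have hlt : (F₀.image (wordMap δ t)).card < F₀.card := by
      rcases lt_or_eq_of_le hle with h | h
      · exact h
      · exfalso
        have hinj : Set.InjOn (wordMap δ t) F₀ :=
          Finset.injOn_of_card_image_eq h
        exact hxy (hinj hx hy ht)
    have : (Finset.image (wordMap δ (s ++ t)) Finset.univ).card ∈ S := ⟨s ++ t, rfl⟩
    have := Nat.sInf_le this
    rw [hsub] at this
    omega
  -- reach p from some element of F₀
  obtain ⟨q, hq⟩ : F₀.Nonempty := ⟨wordMap δ s (Classical.arbitrary V),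
    Finset.mem_image_of_mem _ (Finset.mem_univ _)⟩
  obtain ⟨u, hu⟩ := exists_word_of_reach hδ (hAGW.2.1 q p)
  refine ⟨F₀.image (wordMap δ u), ⟨⟨s ++ u, ?_⟩, ?_⟩, ?_⟩
  · rw [hF₀, Finset.image_image]
    exact (Finset.image_congr (fun v _ => wordMap_append δ s u v)).symm
  · intro x hx y hy hxy ⟨t, ht⟩
    obtain ⟨x', hx', rfl⟩ := Finset.mem_image.mp hx
    obtain ⟨y', hy', rfl⟩ := Finset.mem_image.mp hy
    have hxy' : x' ≠ y' := fun h => hxy (by rw [h])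
    refine hdead x' hx' y' hy' hxy' ⟨u ++ t, ?_⟩
    rw [wordMap_append, wordMap_append, ht]
  · exact Finset.mem_image.mpr ⟨q, hq, hu⟩
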